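/- Let λ be an infinite cardinal. There exists q < ω such that for all ordinals α, β < λ⁺: if α and β are both divisible by λ^q (ordinal exponentiation and divisibility) and cf(α) = cf(β), then α and β satisfy the same monadic second-order sentences of quantifier depth at most n, where q depends effectively on n. -/

import Mathlib

/-- Monadic second-order formulas over a linear order with `m` unary predicates,
`k` free element variables and `l` free set variables (de Bruijn indexed). -/
inductive MSO (m : ℕ) : ℕ → ℕ → Type
  | lt {k l : ℕ} (i j : Fin k) : MSO m k l
  | eq {k l : ℕ} (i j : Fin k) : MSO m k l
  | mem {k l : ℕ} (i : Fin k) (X : Fin l) : MSO m k l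
  | pred {k l : ℕ} (p : Fin m) (i : Fin k) : MSO m k l
  | not {k l : ℕ} (φ : MSO m k l) : MSO m k l
  | and {k l : ℕ} (φ ψ : MSO m k l) : MSO m k l
  | exElem {k l : ℕ} (φ : MSO m (k + 1) l) : MSO m k l
  | exSet {k l : ℕ} (φ : MSO m k (l + 1)) : MSO m k l

/-- Satisfaction of an MSO formula in a linear order `α` with unary predicates `P`. -/
def MSO.Sat {m : ℕ} {α : Type*} [LinearOrder α] (P : Fin m → Set α) :
    ∀ {k l : ℕ}, MSO m k l → (Fin k → α) → (Fin l → Set α) → Prop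
  | _, _, .lt i j, e, _ => e i < e j
  | _, _, .eq i j, e, _ => e i = e j
  | _, _, .mem i X, e, s => e i ∈ s X
  | _, _, .pred p i, e, _ => e i ∈ P p
  | _, _, .not φ, e, s => ¬ φ.Sat P e s
  | _, _, .and φ ψ, e, s => φ.Sat P e s ∧ ψ.Sat P e s
  | _, _, .exElem φ, e, s => ∃ a : α, φ.Sat P (Fin.cons a e) s
  | _, _, .exSet φ, e, s => ∃ A : Set α, φ.Sat P e (Fin.cons A s)

/-- Quantifier depth of an MSO formula. -/
def MSO.depth {m : ℕ} : ∀ {k l : ℕ}, MSO m k l → ℕ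
  | _, _, .not φ => φ.depth
  | _, _, .and φ ψ => max φ.depth ψ.depth
  | _, _, .exElem φ => φ.depth + 1
  | _, _, .exSet φ => φ.depth + 1
  | _, _, _ => 0

/-- Satisfaction of an MSO sentence (no free variables). -/
def MSO.SatS {m : ℕ} {α : Type*} [LinearOrder α] (P : Fin m → Set α) (φ : MSO m 0 0) : Prop :=
  φ.Sat P (fun i => i.elim0) (fun i => i.elim0)



namespace ShelahMSO

universe u v w

variable {α : Type u} {β : Type v} {γ : Type w}

/-- `A` lies entirely before `B`. -/
def Before [LinearOrder α] (A B : Set α) : Prop := ∀ a ∈ A, ∀ b ∈ B, a < b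

/-- Atomic agreement between two tuples of sets. -/
def Atom [LinearOrder α] [LinearOrder β] {l : ℕ} (s : Fin l → Set α) (t : Fin l → Set β) : Prop :=
  (∀ X Y, (s X ⊆ s Y ↔ t X ⊆ t Y)) ∧ (∀ X, (s X = ∅ ↔ t X = ∅)) ∧
    (∀ X Y, (Before (s X) (s Y) ↔ Before (t X) (t Y)))

/-- Set-only Ehrenfeucht–Fraïssé equivalence of depth `n`. -/
def Eqv [LinearOrder α] [LinearOrder β] :
    ℕ → ∀ {l : ℕ}, (Fin l → Set α) → (Fin l → Set β) → Prop
  | 0, _, s, t => Atom s t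
  | n+1, _, s, t => Atom s t ∧
      (∀ A, ∃ B, Eqv n (Fin.cons A s) (Fin.cons B t)) ∧
      (∀ B, ∃ A, Eqv n (Fin.cons A s) (Fin.cons B t))

section Basic

variable [LinearOrder α] [LinearOrder β] [LinearOrder γ]

theorem Atom.refl {l} (s : Fin l → Set α) : Atom s s :=
  ⟨fun _ _ => Iff.rfl, fun _ => Iff.rfl, fun _ _ => Iff.rfl⟩

theorem Atom.symm {l} {s : Fin l → Set α} {t : Fin l → Set β} (h : Atom s t) : Atom t s :=
  ⟨fun X Y => (h.1 X Y).symm, fun X => (h.2.1 X).symm, fun X Y => (h.2.2 X Y).symm⟩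

theorem Atom.trans {l} {s : Fin l → Set α} {t : Fin l → Set β} {u : Fin l → Set γ}
    (h : Atom s t) (h' : Atom t u) : Atom s u :=
  ⟨fun X Y => (h.1 X Y).trans (h'.1 X Y), fun X => (h.2.1 X).trans (h'.2.1 X),
    fun X Y => (h.2.2 X Y).trans (h'.2.2 X Y)⟩

theorem Eqv.atom : ∀ {n l} {s : Fin l → Set α} {t : Fin l → Set β}, Eqv n s t → Atom s t
  | 0, _, _, _, h => h
  | _+1, _, _, _, h => h.1

theorem Eqv.refl : ∀ (n) {l} (s : Fin l → Set α), Eqv n s s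
  | 0, _, s => Atom.refl s
  | n+1, _, s => ⟨Atom.refl s, fun A => ⟨A, Eqv.refl n _⟩, fun A => ⟨A, Eqv.refl n _⟩⟩

theorem Eqv.symm : ∀ {n l} {s : Fin l → Set α} {t : Fin l → Set β}, Eqv n s t → Eqv n t s
  | 0, _, _, _, h => Atom.symm h
  | n+1, _, _, _, h => ⟨h.1.symm,
      fun B => (h.2.2 B).imp fun _ h' => h'.symm,
      fun A => (h.2.1 A).imp fun _ h' => h'.symm⟩

theorem Eqv.trans : ∀ {n l} {s : Fin l → Set α} {t : Fin l → Set β} {u : Fin l → Set γ},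
    Eqv n s t → Eqv n t u → Eqv n s u
  | 0, _, _, _, _, h, h' => Atom.trans h h'
  | n+1, _, _, _, _, h, h' => ⟨h.1.trans h'.1,
      fun A => by
        obtain ⟨B, hB⟩ := h.2.1 A
        obtain ⟨C, hC⟩ := h'.2.1 B
        exact ⟨C, hB.trans hC⟩,
      fun C => by
        obtain ⟨B, hB⟩ := h'.2.2 C
        obtain ⟨A, hA⟩ := h.2.2 B
        exact ⟨A, hA.trans hB⟩⟩

theorem Eqv.reindex : ∀ {n l l'} {s : Fin l → Set α} {t : Fin l → Set β},
    Eqv n s t → ∀ (ρ : Fin l' → Fin l), Eqv n (s ∘ ρ) (t ∘ ρ)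
  | 0, _, _, _, _, h, ρ =>
      ⟨fun X Y => h.1 (ρ X) (ρ Y), fun X => h.2.1 (ρ X), fun X Y => h.2.2 (ρ X) (ρ Y)⟩
  | n+1, _, _, _, _, h, ρ => by
      refine ⟨⟨fun X Y => h.1.1 (ρ X) (ρ Y), fun X => h.1.2.1 (ρ X),
        fun X Y => h.1.2.2 (ρ X) (ρ Y)⟩, ?_, ?_⟩
      · intro A
        obtain ⟨B, hB⟩ := h.2.1 A
        refine ⟨B, ?_⟩
        have := hB.reindex (fun j => Fin.cases 0 (fun j' => (ρ j').succ) j)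
        convert this using 2 <;>
          · funext j
            refine Fin.cases rfl (fun j' => ?_) j
            simp [Fin.cons_succ]
      · intro B
        obtain ⟨A, hA⟩ := h.2.2 B
        refine ⟨A, ?_⟩
        have := hA.reindex (fun j => Fin.cases 0 (fun j' => (ρ j').succ) j)
        convert this using 2 <;>
          · funext j
            refine Fin.cases rfl (fun j' => ?_) j
            simp [Fin.cons_succ]

/-- A structure is `Eqv`-equivalent to its image under an order isomorphism. -/
theorem Eqv.ofIso (f : α ≃o β) : ∀ (n) {l} (s : Fin l → Set α), Eqv n s (fun X => f '' s X)
  | 0, _, s => by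
      refine ⟨fun X Y => ?_, fun X => ?_, fun X Y => ?_⟩
      · simp [Set.image_subset_image_iff f.injective]
      · simp [Set.image_eq_empty]
      · constructor
        · rintro h _ ⟨a, ha, rfl⟩ _ ⟨b, hb, rfl⟩
          exact f.lt_iff_lt.2 (h a ha b hb)
        · intro h a ha b hb
          exact f.lt_iff_lt.1 (h _ ⟨a, ha, rfl⟩ _ ⟨b, hb, rfl⟩)
  | n+1, _, s => by
      refine ⟨(Eqv.ofIso f 0 s).atom, ?_, ?_⟩
      · intro A
        refine ⟨f '' A, ?_⟩
        have h := Eqv.ofIso f n (Fin.cons A s)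
        have e : (fun X => f '' (Fin.cons A s : Fin _ → Set α) X) = Fin.cons (f '' A) (fun X => f '' s X) := by
          funext j
          exact Fin.cases rfl (fun j' => rfl) j
        rwa [e] at h
      · intro B
        refine ⟨f ⁻¹' B, ?_⟩
        have h := Eqv.ofIso f n (Fin.cons (f ⁻¹' B) s)
        have e : (fun X => f '' (Fin.cons (f ⁻¹' B) s : Fin _ → Set α) X)
            = Fin.cons B (fun X => f '' s X) := by
          funext j
          refine Fin.cases ?_ (fun j' => rfl) j
          simp [Set.image_preimage_eq _ f.surjective]
        rwa [e] at h

end Basic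


section Bridge

variable [LinearOrder α] [LinearOrder β]

/-- Element tuple encoded as singleton sets, followed by the set tuple. -/
def sig {k l : ℕ} (e : Fin k → α) (s : Fin l → Set α) : Fin (k + l) → Set α :=
  Fin.append (fun i => {e i}) s

theorem singleton_of_eqv {m l} {s : Fin l → Set α} {t : Fin l → Set β}
    {a : α} {B : Set β}
    (h : Eqv (m + 1) (Fin.cons ({a} : Set α) s) (Fin.cons B t)) : ∃ b, B = {b} := by
  have hB0 : B ≠ ∅ := by
    intro hB
    have := (h.1.2.1 0).2
    simp [hB] at this
  obtain ⟨b, hb⟩ := Set.nonempty_iff_ne_empty.2 hB0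
  refine ⟨b, ?_⟩
  ext b'
  simp only [Set.mem_singleton_iff]
  constructor
  · intro hb'
    by_contra hne
    obtain ⟨D, hD⟩ := h.2.2 {b}
    have at1 : D ⊆ {a} := by
      refine (hD.atom.1 0 1).2 ?_
      simpa [Fin.cons_zero, Fin.cons_succ] using
        (Set.singleton_subset_iff.2 hb : ({b} : Set β) ⊆ B)
    have at2 : D ≠ ∅ := by
      intro hDe
      have := (hD.atom.2.1 0).1
      simp [Fin.cons_zero, hDe] at this
    have hDa : D = {a} := by
      obtain ⟨d, hd⟩ := Set.nonempty_iff_ne_empty.2 at2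
      have : d = a := at1 hd
      subst this
      apply Set.eq_singleton_iff_unique_mem.2 ⟨hd, fun x hx => at1 hx⟩
    have at3 : B ⊆ {b} := by
      refine (hD.atom.1 1 0).1 ?_
      simp [Fin.cons_zero, Fin.cons_succ, hDa]
    exact hne (at3 hb')
  · rintro rfl; exact hb

/-- Reindexing that inserts a new first element slot. -/
def insE (k l : ℕ) : Fin ((k + 1) + l) → Fin ((k + l) + 1) :=
  Fin.addCases (fun i => Fin.cases 0 (fun i' => (Fin.castAdd l i').succ) i)
    (fun X => (Fin.natAdd k X).succ)

/-- Reindexing that inserts a new first set slot. -/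
def insS (k l : ℕ) : Fin (k + (l + 1)) → Fin ((k + l) + 1) :=
  Fin.addCases (fun i => (Fin.castAdd l i).succ)
    (fun X => Fin.cases 0 (fun X' => (Fin.natAdd k X').succ) X)

theorem sig_cons_elem {k l} (e : Fin k → α) (s : Fin l → Set α) (a : α) :
    sig (Fin.cons a e) s = (Fin.cons ({a} : Set α) (sig e s)) ∘ insE k l := by
  funext j
  induction j using Fin.addCases with
  | left i =>
    induction i using Fin.cases with
    | zero => simp [sig, insE, Fin.append_left]
    | succ i' => simp [sig, insE, Fin.append_left, Fin.cons_succ]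
  | right X => simp [sig, insE, Fin.append_right, Fin.cons_succ]

theorem sig_cons_set {k l} (e : Fin k → α) (s : Fin l → Set α) (A : Set α) :
    sig e (Fin.cons A s) = (Fin.cons A (sig e s)) ∘ insS k l := by
  funext j
  induction j using Fin.addCases with
  | left i => simp [sig, insS, Fin.append_left, Fin.cons_succ]
  | right X =>
    induction X using Fin.cases with
    | zero => simp [sig, insS, Fin.append_right]
    | succ X' => simp [sig, insS, Fin.append_right, Fin.cons_succ]

theorem bridge {k l : ℕ} (φ : MSO 0 k l) :
    ∀ {n : ℕ} {e : Fin k → α} {s : Fin l → Set α} {f : Fin k → β} {t : Fin l → Set β}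
      (P : Fin 0 → Set α) (P' : Fin 0 → Set β),
      Eqv n (sig e s) (sig f t) → φ.depth + 1 ≤ n →
      (φ.Sat P e s ↔ φ.Sat P' f t) := by
  induction φ with
  | @lt k l i j =>
    intro n e s f t P P' h _
    have h3 := h.atom.2.2 (Fin.castAdd l i) (Fin.castAdd l j)
    simp only [sig, Fin.append_left] at h3
    show e i < e j ↔ f i < f j
    simpa [Before] using h3
  | @eq k l i j =>
    intro n e s f t P P' h _
    have h1 := h.atom.1 (Fin.castAdd l i) (Fin.castAdd l j)
    simp only [sig, Fin.append_left] at h1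
    show e i = e j ↔ f i = f j
    simpa [Set.singleton_subset_singleton] using h1
  | @mem k l i X =>
    intro n e s f t P P' h _
    have h1 := h.atom.1 (Fin.castAdd l i) (Fin.natAdd k X)
    simp only [sig, Fin.append_left, Fin.append_right] at h1
    show e i ∈ s X ↔ f i ∈ t X
    simpa [Set.singleton_subset_iff] using h1
  | pred p i => exact p.elim0
  | not φ' ih =>
    intro n e s f t P P' h hd
    show ¬ _ ↔ ¬ _
    simp only [MSO.depth] at hd
    exact not_congr (ih P P' h hd)
  | and φ' ψ' ih ih' =>
    intro n e s f t P P' h hd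
    show _ ∧ _ ↔ _ ∧ _
    simp only [MSO.depth] at hd
    exact and_congr (ih P P' h (by omega)) (ih' P P' h (by omega))
  | @exElem k l φ' ih =>
    intro n e s f t P P' h hd
    simp only [MSO.depth] at hd
    obtain ⟨m, rfl⟩ : ∃ m, n = (m + 1) + 1 := ⟨n - 2, by omega⟩
    show (∃ a, φ'.Sat P (Fin.cons a e) s) ↔ (∃ b, φ'.Sat P' (Fin.cons b f) t)
    constructor
    · rintro ⟨a, ha⟩
      obtain ⟨B, hB⟩ := h.2.1 {a}
      obtain ⟨b, rfl⟩ := singleton_of_eqv hB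
      have key : Eqv (m + 1) (sig (Fin.cons a e) s) (sig (Fin.cons b f) t) := by
        have := hB.reindex (insE k l)
        rwa [← sig_cons_elem, ← sig_cons_elem] at this
      exact ⟨b, (ih P P' key (by omega)).mp ha⟩
    · rintro ⟨b, hb⟩
      obtain ⟨A, hA⟩ := h.2.2 {b}
      obtain ⟨a, rfl⟩ := singleton_of_eqv hA.symm
      have key : Eqv (m + 1) (sig (Fin.cons a e) s) (sig (Fin.cons b f) t) := by
        have := hA.reindex (insE k l)
        rwa [← sig_cons_elem, ← sig_cons_elem] at this
      exact ⟨a, (ih P P' key (by omega)).mpr hb⟩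
  | @exSet k l φ' ih =>
    intro n e s f t P P' h hd
    simp only [MSO.depth] at hd
    obtain ⟨m, rfl⟩ : ∃ m, n = m + 1 := ⟨n - 1, by omega⟩
    show (∃ A, φ'.Sat P e (Fin.cons A s)) ↔ (∃ B, φ'.Sat P' f (Fin.cons B t))
    constructor
    · rintro ⟨A, hA⟩
      obtain ⟨B, hB⟩ := h.2.1 A
      have key : Eqv m (sig e (Fin.cons A s)) (sig f (Fin.cons B t)) := by
        have := hB.reindex (insS k l)
        rwa [← sig_cons_set, ← sig_cons_set] at this
      exact ⟨B, (ih P P' key (by omega)).mp hA⟩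
    · rintro ⟨B, hB⟩
      obtain ⟨A, hA⟩ := h.2.2 B
      have key : Eqv m (sig e (Fin.cons A s)) (sig f (Fin.cons B t)) := by
        have := hA.reindex (insS k l)
        rwa [← sig_cons_set, ← sig_cons_set] at this
      exact ⟨A, (ih P P' key (by omega)).mpr hB⟩

end Bridge

section Sum

variable {ι : Type w} [LinearOrder ι] {A : ι → Type u} [∀ i, LinearOrder (A i)]
  {B : ι → Type v} [∀ i, LinearOrder (B i)]

/-- Restriction of a subset of a lexicographic sum to one component. -/
def res (i : ι) (S : Set (Σₗ j, A j)) : Set (A i) := {x | toLex ⟨i, x⟩ ∈ S}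

theorem sum_subset_iff {S T : Set (Σₗ j, A j)} : S ⊆ T ↔ ∀ i, res i S ⊆ res i T := by
  constructor
  · intro h i x hx
    exact h hx
  · rintro h ⟨i, x⟩ hx
    exact h i hx

theorem sum_empty_iff {S : Set (Σₗ j, A j)} : S = ∅ ↔ ∀ i, res i S = ∅ := by
  constructor
  · intro h i
    rw [Set.eq_empty_iff_forall_notMem] at h ⊢
    intro x hx
    exact h _ hx
  · intro h
    rw [Set.eq_empty_iff_forall_notMem]
    rintro ⟨i, x⟩ hx
    exact Set.eq_empty_iff_forall_notMem.1 (h i) x hx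

theorem sum_before_iff {S T : Set (Σₗ j, A j)} :
    Before S T ↔ ((∀ i, Before (res i S) (res i T)) ∧
      ∀ i j, j ≤ i → res i S ≠ ∅ → res j T ≠ ∅ → i = j) := by
  constructor
  · intro h
    refine ⟨fun i a ha b hb => ?_, fun i j hji hSi hTj => ?_⟩
    · have := h _ ha _ hb
      rw [Sigma.Lex.lt_def] at this
      rcases this with h' | ⟨h', hlt⟩
      · exact absurd h' (lt_irrefl i)
      · exact hlt
    · obtain ⟨a, ha⟩ := Set.nonempty_iff_ne_empty.2 hSi
      obtain ⟨b, hb⟩ := Set.nonempty_iff_ne_empty.2 hTj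
      have := h _ ha _ hb
      rw [Sigma.Lex.lt_def] at this
      rcases this with h' | ⟨h', _⟩
      · exact absurd h' (not_lt.2 hji)
      · exact h'
  · rintro ⟨h1, h2⟩ ⟨i, a⟩ ha ⟨j, b⟩ hb
    rcases lt_trichotomy i j with hij | rfl | hij
    · exact Sigma.Lex.lt_def.2 (Or.inl hij)
    · exact Sigma.Lex.lt_def.2 (Or.inr ⟨rfl, h1 i a ha b hb⟩)
    · exact absurd (h2 i j hij.le (Set.nonempty_iff_ne_empty.1 ⟨a, ha⟩)
        (Set.nonempty_iff_ne_empty.1 ⟨b, hb⟩)) hij.ne'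

theorem Atom.sum {l} {s : Fin l → Set (Σₗ j, A j)} {t : Fin l → Set (Σₗ j, B j)}
    (h : ∀ i, Atom (fun X => res i (s X)) (fun X => res i (t X))) : Atom s t := by
  refine ⟨fun X Y => ?_, fun X => ?_, fun X Y => ?_⟩
  · rw [sum_subset_iff, sum_subset_iff]
    exact forall_congr' fun i => (h i).1 X Y
  · rw [sum_empty_iff, sum_empty_iff]
    exact forall_congr' fun i => (h i).2.1 X
  · rw [sum_before_iff, sum_before_iff]
    refine and_congr (forall_congr' fun i => (h i).2.2 X Y) ?_
    refine forall_congr' fun i => forall_congr' fun j => imp_congr_right fun _ => ?_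
    exact imp_congr (not_congr ((h i).2.1 X)) (imp_congr (not_congr ((h j).2.1 Y)) Iff.rfl)

theorem res_cons (i : ι) (S : Set (Σₗ j, A j)) {l} (s : Fin l → Set (Σₗ j, A j)) :
    (fun X => res i ((Fin.cons S s : Fin (l+1) → Set (Σₗ j, A j)) X)) =
      Fin.cons (res i S) (fun X => res i (s X)) := by
  funext X
  exact Fin.cases rfl (fun X' => rfl) X

theorem Eqv.sum : ∀ {n l : ℕ} {s : Fin l → Set (Σₗ j, A j)} {t : Fin l → Set (Σₗ j, B j)},
    (∀ i, Eqv n (fun X => res i (s X)) (fun X => res i (t X))) → Eqv n s t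
  | 0, _, s, t, h => Atom.sum h
  | n+1, _, s, t, h => by
    refine ⟨Atom.sum fun i => (h i).atom, ?_, ?_⟩
    · intro S
      choose Bf hBf using fun i => (h i).2.1 (res i S)
      refine ⟨{p | (ofLex p).2 ∈ Bf (ofLex p).1}, Eqv.sum fun i => ?_⟩
      rw [res_cons, res_cons]
      have : res i {p : Σₗ j, B j | (ofLex p).2 ∈ Bf (ofLex p).1} = Bf i := rfl
      rw [this]
      exact hBf i
    · intro T
      choose Af hAf using fun i => (h i).2.2 (res i T)
      refine ⟨{p | (ofLex p).2 ∈ Af (ofLex p).1}, Eqv.sum fun i => ?_⟩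
      rw [res_cons, res_cons]
      have : res i {p : Σₗ j, A j | (ofLex p).2 ∈ Af (ofLex p).1} = Af i := rfl
      rw [this]
      exact hAf i

end Sum

section Theory

/-- Atomic theory data. -/
def At0 (l : ℕ) : Type := (Fin l → Fin l → Prop) × (Fin l → Prop) × (Fin l → Fin l → Prop)

instance At0.finite (l : ℕ) : Finite (At0 l) := by
  unfold At0
  infer_instance

/-- The depth-`n` theory datatype: a nested finite type. -/
def ThT : ℕ → ℕ → Type
  | 0, l => At0 l
  | n+1, l => At0 l × Set (ThT n (l+1))

instance ThT.finite : ∀ (n l : ℕ), Finite (ThT n l)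
  | 0, l => by unfold ThT; infer_instance
  | n+1, l => by
      unfold ThT
      have := ThT.finite n (l+1)
      infer_instance

variable [LinearOrder α] [LinearOrder β]

/-- Atomic theory of a tuple of sets. -/
def at0 {l : ℕ} (s : Fin l → Set α) : At0 l :=
  ⟨fun X Y => s X ⊆ s Y, fun X => s X = ∅, fun X Y => Before (s X) (s Y)⟩

/-- The depth-`n` theory of a tuple of sets. -/
def th : ∀ (n : ℕ) {l : ℕ}, (Fin l → Set α) → ThT n l
  | 0, _, s => at0 s
  | n+1, _, s => (at0 s, {T | ∃ A, T = th n (Fin.cons A s)})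

theorem atom_of_at0_eq {l} {s : Fin l → Set α} {t : Fin l → Set β}
    (h : at0 s = at0 t) : Atom s t := by
  have h1 := congrArg Prod.fst h
  have h2 := congrArg (fun p : At0 l => p.2.1) h
  have h3 := congrArg (fun p : At0 l => p.2.2) h
  simp only [at0] at h1 h2 h3
  exact ⟨fun X Y => iff_of_eq (congrFun (congrFun h1 X) Y),
    fun X => iff_of_eq (congrFun h2 X),
    fun X Y => iff_of_eq (congrFun (congrFun h3 X) Y)⟩

theorem eqv_of_th_eq : ∀ {n l : ℕ} {s : Fin l → Set α} {t : Fin l → Set β},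
    th n s = th n t → Eqv n s t
  | 0, _, s, t, h => atom_of_at0_eq h
  | n+1, _, s, t, h => by
    have h0 : at0 s = at0 t := congrArg Prod.fst h
    have hs : {T | ∃ A, T = th n (Fin.cons A s)} = {T | ∃ B, T = th n (Fin.cons B t)} :=
      congrArg Prod.snd h
    refine ⟨atom_of_at0_eq h0, fun A => ?_, fun B => ?_⟩
    · have : th n (Fin.cons A s) ∈ {T | ∃ B, T = th n (Fin.cons B t)} := by
        rw [← hs]
        exact ⟨A, rfl⟩
      obtain ⟨B, hB⟩ := this
      exact ⟨B, eqv_of_th_eq hB⟩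
    · have : th n (Fin.cons B t) ∈ {T | ∃ A, T = th n (Fin.cons A s)} := by
        rw [hs]
        exact ⟨B, rfl⟩
      obtain ⟨A, hA⟩ := this
      exact ⟨A, eqv_of_th_eq hA.symm⟩

end Theory

section OrdIso

open Ordinal Set

/-- Decomposition of `Iio e` as a lexicographic sum of pieces along an increasing
continuous family `G`. -/
noncomputable def sigmaIso {κo e : Ordinal.{u}} {G : Ordinal.{u} → Ordinal.{u}}
    {d : Set.Iio κo → Ordinal.{u}}
    (hd : ∀ i : Set.Iio κo, G i.1 + d i = G (i.1 + 1))
    (hG : ∀ i ≤ κo, G i = Ordinal.bsup i (fun j _ => G (j + 1)))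
    (he : G κo = e) :
    (Σₗ i : Set.Iio κo, Set.Iio (d i)) ≃o Set.Iio e := by
  have mono : ∀ i j, i ≤ j → j ≤ κo → G i ≤ G j := by
    intro i j hij hj
    rw [hG i (hij.trans hj), hG j hj]
    exact Ordinal.bsup_le fun j' hj' => Ordinal.le_bsup _ _ (hj'.trans_le hij)
  have hGsucc : ∀ i : Set.Iio κo, G (i.1 + 1) ≤ e := by
    intro i
    rw [← he]
    exact mono _ _ (Ordinal.add_one_eq_succ i.1 ▸ Order.succ_le_of_lt i.2) le_rfl
  set F : (Σₗ i : Set.Iio κo, Set.Iio (d i)) → Set.Iio e := fun p =>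
    ⟨G p.1.1 + p.2.1, lt_of_lt_of_le (by
      calc G p.1.1 + p.2.1 < G p.1.1 + d p.1 := by
            exact (add_lt_add_iff_left _).2 p.2.2
        _ = G (p.1.1 + 1) := hd p.1) (hGsucc p.1)⟩ with hF
  have hmono : StrictMono F := by
    rintro ⟨i, x⟩ ⟨j, y⟩ hlt
    have hl : @Sigma.Lex (Set.Iio κo) (fun i => Set.Iio (d i)) (· < ·) (fun _ => (· < ·)) ⟨i, x⟩ ⟨j, y⟩ := hlt
    cases hl with
    | left x y hij =>
      show (G i.1 + x.1 : Ordinal) < G j.1 + y.1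
      calc G i.1 + x.1 < G (i.1 + 1) := by
            rw [← hd i]
            exact (add_lt_add_iff_left _).2 x.2
        _ ≤ G j.1 := by
            refine mono _ _ ?_ j.2.le
            exact Ordinal.add_one_eq_succ i.1 ▸ Order.succ_le_of_lt hij
        _ ≤ G j.1 + y.1 := le_self_add
    | right x y hxy =>
      show (G i.1 + x.1 : Ordinal) < G i.1 + y.1
      exact (add_lt_add_iff_left _).2 hxy
  have hsurj : Function.Surjective F := by
    rintro ⟨o, ho⟩
    have hne : {i : Ordinal | i < κo ∧ o < G (i + 1)}.Nonempty := by
      by_contra hemp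
      push_neg at hemp
      simp only [Set.not_nonempty_iff_eq_empty, Set.eq_empty_iff_forall_notMem] at hemp
      have : e ≤ o := by
        rw [← he, hG κo le_rfl]
        refine Ordinal.bsup_le fun j hj => ?_
        by_contra hlt
        exact hemp j ⟨hj, not_le.1 hlt⟩
      exact absurd ho (not_lt.2 this)
    set i₀ := Ordinal.lt_wf.min _ hne with hi₀
    obtain ⟨hi₀κ, hoG⟩ := Ordinal.lt_wf.min_mem _ hne
    have hGi₀ : G i₀ ≤ o := by
      rw [hG i₀ hi₀κ.le]
      refine Ordinal.bsup_le fun j hj => ?_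
      by_contra hlt
      exact Ordinal.lt_wf.not_lt_min {i : Ordinal | i < κo ∧ o < G (i + 1)} ⟨hj.trans hi₀κ, not_le.1 hlt⟩ hj
    refine ⟨⟨⟨i₀, hi₀κ⟩, ⟨o - G i₀, ?_⟩⟩, ?_⟩
    · have : G i₀ + (o - G i₀) < G (i₀ + 1) := by
        rw [Ordinal.add_sub_cancel_of_le hGi₀]
        exact hoG
      rw [← hd ⟨i₀, hi₀κ⟩] at this
      exact (add_lt_add_iff_left _).1 this
    · show (⟨G i₀ + (o - G i₀), _⟩ : Set.Iio e) = ⟨o, ho⟩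
      simp [Ordinal.add_sub_cancel_of_le hGi₀]
  exact StrictMono.orderIsoOfSurjective F hmono hsurj

end OrdIso

section Main

open Ordinal Set

theorem emptyFam_eq {X : Type*} (f g : Fin 0 → X) : f = g := funext fun i => i.elim0

/-- Depth-`N` monadic equivalence of two bare linear orders. -/
def EquT (N : ℕ) (α : Type u) (β : Type v) [LinearOrder α] [LinearOrder β] : Prop :=
  Eqv N (fun X : Fin 0 => (X.elim0 : Set α)) (fun X : Fin 0 => (X.elim0 : Set β))

theorem EquT.refl (N : ℕ) (α : Type u) [LinearOrder α] : EquT N α α := Eqv.refl N _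

theorem EquT.symm' {N : ℕ} {α : Type u} {β : Type v} [LinearOrder α] [LinearOrder β]
    (h : EquT N α β) : EquT N β α := Eqv.symm h

theorem EquT.trans' {N : ℕ} {α : Type u} {β : Type v} {γ : Type w}
    [LinearOrder α] [LinearOrder β] [LinearOrder γ]
    (h : EquT N α β) (h' : EquT N β γ) : EquT N α γ := Eqv.trans h h'

theorem EquT.ofIso {α : Type u} {β : Type v} [LinearOrder α] [LinearOrder β]
    (f : α ≃o β) (N : ℕ) : EquT N α β := by
  have h := Eqv.ofIso f N (fun X : Fin 0 => (X.elim0 : Set α))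
  unfold EquT
  rw [emptyFam_eq (fun X : Fin 0 => (X.elim0 : Set β))
    (fun X => f '' (fun X : Fin 0 => (X.elim0 : Set α)) X)]
  exact h

theorem EquT.sigma {ι : Type w} [LinearOrder ι] {A : ι → Type u} [∀ i, LinearOrder (A i)]
    {B : ι → Type v} [∀ i, LinearOrder (B i)] {N : ℕ}
    (h : ∀ i, EquT N (A i) (B i)) : EquT N (Σₗ i, A i) (Σₗ i, B i) := by
  apply Eqv.sum
  intro i
  have hi := h i
  unfold EquT at hi
  convert hi using 2 <;> exact emptyFam_eq _ _

/-- Depth-`N` monadic equivalence of two ordinals. -/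
def Equ (N : ℕ) (u v : Ordinal.{u}) : Prop := EquT N (Set.Iio u) (Set.Iio v)

theorem Equ.refl (N : ℕ) (u : Ordinal.{u}) : Equ N u u := EquT.refl N _
theorem Equ.symm' {N : ℕ} {u v : Ordinal.{u}} (h : Equ N u v) : Equ N v u := EquT.symm' h
theorem Equ.trans' {N : ℕ} {u v w : Ordinal.{u}} (h : Equ N u v) (h' : Equ N v w) :
    Equ N u w := EquT.trans' h h'

theorem equ_pieces {N : ℕ} {κo e e' : Ordinal.{u}} {G G' : Ordinal.{u} → Ordinal.{u}}
    {d d' : Set.Iio κo → Ordinal.{u}}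
    (hd : ∀ i : Set.Iio κo, G i.1 + d i = G (i.1 + 1))
    (hG : ∀ i ≤ κo, G i = Ordinal.bsup.{u, u} i (fun j _ => G (j + 1)))
    (he : G κo = e)
    (hd' : ∀ i : Set.Iio κo, G' i.1 + d' i = G' (i.1 + 1))
    (hG' : ∀ i ≤ κo, G' i = Ordinal.bsup.{u, u} i (fun j _ => G' (j + 1)))
    (he' : G' κo = e')
    (hpt : ∀ i, Equ N (d i) (d' i)) : Equ N e e' :=
  ((EquT.ofIso (sigmaIso hd hG he).symm N).trans' (EquT.sigma hpt)).trans'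
    (EquT.ofIso (sigmaIso hd' hG' he') N)

theorem mul_bsup_char {μ : Ordinal.{u}} (hμ : 0 < μ) (i : Ordinal.{u}) :
    μ * i = Ordinal.bsup.{u, u} i (fun j _ => μ * (j + 1)) := by
  apply le_antisymm
  · rcases Ordinal.zero_or_succ_or_isSuccLimit i with rfl | ⟨j, rfl⟩ | hl
    · simp
    · refine le_trans ?_ (Ordinal.le_bsup _ j (Order.lt_succ j))
      rw [Ordinal.add_one_eq_succ]
    · rw [← Ordinal.IsNormal.bsup_eq.{u, u} (Ordinal.isNormal_mul_right hμ) hl]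
      exact Ordinal.bsup_le fun j hj =>
        le_trans (mul_le_mul_right (le_self_add : j ≤ j + 1) μ) (Ordinal.le_bsup _ j hj)
  · exact Ordinal.bsup_le fun j hj =>
      mul_le_mul_right (Ordinal.add_one_eq_succ j ▸ Order.succ_le_of_lt hj) μ

theorem lt_two_cases (i : Ordinal.{u}) (hi : i < 2) : i = 0 ∨ i = 1 := by
  have h2s : (2 : Ordinal.{u}) = Order.succ 1 := by
    rw [← Ordinal.add_one_eq_succ]; norm_num
  rw [h2s, Order.lt_succ_iff] at hi
  rcases lt_or_eq_of_le hi with h | h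
  · exact Or.inl (Ordinal.lt_one_iff_zero.1 h)
  · exact Or.inr h

theorem bin_G_char (u v : Ordinal.{u}) :
    ∀ i ≤ (2 : Ordinal.{u}),
      (fun i : Ordinal.{u} => if i = 0 then 0 else if i = 1 then u else u + v) i =
        Ordinal.bsup.{u, u} i (fun j _ =>
          (fun i : Ordinal.{u} => if i = 0 then 0 else if i = 1 then u else u + v) (j + 1)) := by
  set G : Ordinal.{u} → Ordinal.{u} :=
    fun i => if i = 0 then 0 else if i = 1 then u else u + v with hGdef
  have hG0 : G 0 = 0 := if_pos rfl
  have hG1 : G 1 = u := by rw [hGdef]; norm_num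
  have hG2 : G 2 = u + v := by rw [hGdef]; norm_num
  intro i hi
  rcases eq_or_lt_of_le hi with rfl | hi2
  · apply le_antisymm
    · rw [hG2]
      refine le_trans (le_of_eq ?_) (Ordinal.le_bsup _ 1 one_lt_two)
      rw [one_add_one_eq_two, hG2]
    · refine Ordinal.bsup_le fun j hj => ?_
      rcases lt_two_cases j hj with rfl | rfl
      · rw [zero_add, hG1, hG2]; exact le_self_add
      · rw [one_add_one_eq_two]
  · rcases lt_two_cases i hi2 with rfl | rfl
    · rw [hG0, Ordinal.bsup_zero]
    · apply le_antisymm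
      · refine le_trans (le_of_eq ?_) (Ordinal.le_bsup _ 0 zero_lt_one)
        rw [zero_add]
      · refine Ordinal.bsup_le fun j hj => ?_
        rw [Ordinal.lt_one_iff_zero.1 hj, zero_add]

/-- Binary sum congruence for `Equ`. -/
theorem equ_add_congr {N : ℕ} {u v u' v' : Ordinal.{u}}
    (h1 : Equ N u u') (h2 : Equ N v v') : Equ N (u + v) (u' + v') := by
  set G : Ordinal.{u} → Ordinal.{u} :=
    fun i => if i = 0 then 0 else if i = 1 then u else u + v with hGdef
  set G' : Ordinal.{u} → Ordinal.{u} :=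
    fun i => if i = 0 then 0 else if i = 1 then u' else u' + v' with hG'def
  have hG0 : G 0 = 0 := if_pos rfl
  have hG1 : G 1 = u := by rw [hGdef]; norm_num
  have hG2 : G 2 = u + v := by rw [hGdef]; norm_num
  have hG'0 : G' 0 = 0 := if_pos rfl
  have hG'1 : G' 1 = u' := by rw [hG'def]; norm_num
  have hG'2 : G' 2 = u' + v' := by rw [hG'def]; norm_num
  refine equ_pieces (κo := 2) (G := G) (G' := G')
    (d := fun i => if i.1 = 0 then u else v) (d' := fun i => if i.1 = 0 then u' else v')
    ?_ (bin_G_char u v) hG2 ?_ (bin_G_char u' v') hG'2 ?_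
  · rintro ⟨i, hi⟩
    rcases lt_two_cases i hi with rfl | rfl
    · show G 0 + (if (0 : Ordinal) = 0 then u else v) = G (0 + 1)
      rw [if_pos rfl, hG0, zero_add, zero_add, hG1]
    · show G 1 + (if (1 : Ordinal) = 0 then u else v) = G (1 + 1)
      rw [if_neg one_ne_zero, hG1, one_add_one_eq_two, hG2]
  · rintro ⟨i, hi⟩
    rcases lt_two_cases i hi with rfl | rfl
    · show G' 0 + (if (0 : Ordinal) = 0 then u' else v') = G' (0 + 1)
      rw [if_pos rfl, hG'0, zero_add, zero_add, hG'1]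
    · show G' 1 + (if (1 : Ordinal) = 0 then u' else v') = G' (1 + 1)
      rw [if_neg one_ne_zero, hG'1, one_add_one_eq_two, hG'2]
  · rintro ⟨i, hi⟩
    rcases lt_two_cases i hi with rfl | rfl
    · show Equ N (if (0 : Ordinal) = 0 then u else v) (if (0 : Ordinal) = 0 then u' else v')
      rw [if_pos rfl, if_pos rfl]; exact h1
    · show Equ N (if (1 : Ordinal) = 0 then u else v) (if (1 : Ordinal) = 0 then u' else v')
      rw [if_neg one_ne_zero, if_neg one_ne_zero]; exact h2

/-- Ordinals `r ≤ λ` are absorbed on the left by `λ^D` for `D ≥ 2`. -/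
theorem add_absorp_le (lam : Cardinal.{u}) (hlam : Cardinal.aleph0 ≤ lam)
    {r : Ordinal.{u}} (hr : r ≤ lam.ord) {D : ℕ} (hD : 2 ≤ D) :
    r + lam.ord ^ (D : Ordinal) = lam.ord ^ (D : Ordinal) := by
  have hω : ω ≤ lam.ord := by
    rw [← Cardinal.ord_aleph0]
    exact Cardinal.ord_le_ord.2 hlam
  have h1 : (1 : Ordinal) < lam.ord := lt_of_lt_of_le Ordinal.one_lt_omega0 hω
  obtain ⟨ξ, hξ⟩ : ∃ ξ : Ordinal.{u}, lam.ord = ω ^ ξ := by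
    have hp := Ordinal.isPrincipal_add_ord hlam
    rcases Ordinal.principal_add_iff_zero_or_omega0_opow.1 hp with h0 | h
    · exact absurd h0 (ne_of_gt (lt_trans zero_lt_one h1))
    · obtain ⟨ξ, hξ⟩ := h
      exact ⟨ξ, hξ.symm⟩
  have hlt : r < lam.ord ^ (D : Ordinal) := by
    calc r ≤ lam.ord := hr
      _ = lam.ord ^ (1 : Ordinal) := (Ordinal.opow_one _).symm
      _ < lam.ord ^ (D : Ordinal) := by
          rw [Ordinal.opow_lt_opow_iff_right h1]
          exact_mod_cast (by omega : (1 : ℕ) < D)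
  rw [hξ, ← Ordinal.opow_mul] at hlt ⊢
  exact Ordinal.add_absorp hlt le_rfl

theorem card_opow_nat (lam : Cardinal.{u}) (hlam : Cardinal.aleph0 ≤ lam) :
    ∀ m : ℕ, (lam.ord ^ (m : Ordinal)).card ≤ lam := by
  intro m
  induction m with
  | zero =>
    rw [Nat.cast_zero, Ordinal.opow_zero, Ordinal.card_one]
    exact le_trans (le_of_lt Cardinal.one_lt_aleph0) hlam
  | succ m ih =>
    rw [Nat.cast_succ, Ordinal.opow_add, Ordinal.opow_one, Ordinal.card_mul]
    calc (lam.ord ^ (m : Ordinal)).card * lam.ord.card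
        ≤ lam * lam := by
          refine mul_le_mul' ih ?_
          rw [Cardinal.card_ord]
      _ = lam := Cardinal.mul_eq_self hlam

/-- The main transfinite induction. -/
theorem mainlem (lam : Cardinal.{u}) (hlam : Cardinal.aleph0 ≤ lam) {N Q D : ℕ} (hD : 2 ≤ D)
    (hbase : Equ N (lam.ord ^ (Q : Ordinal))
      (lam.ord ^ (Q : Ordinal) * lam.ord ^ (D : Ordinal))) :
    ∀ γ : Ordinal.{u}, γ ≠ 0 → γ.card ≤ lam →
      (¬ Order.IsSuccLimit γ → Equ N (lam.ord ^ (Q : Ordinal) * γ) (lam.ord ^ (Q : Ordinal))) ∧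
      (Order.IsSuccLimit γ → Equ N (lam.ord ^ (Q : Ordinal) * γ)
        (lam.ord ^ (Q : Ordinal) * γ.cof.ord)) := by
  have hω : ω ≤ lam.ord := by
    rw [← Cardinal.ord_aleph0]
    exact Cardinal.ord_le_ord.2 hlam
  have hlam0 : (0 : Ordinal) < lam.ord := lt_of_lt_of_le Ordinal.omega0_pos hω
  set P : Ordinal.{u} := lam.ord ^ (Q : Ordinal) with hPdef
  have hP0 : (0 : Ordinal) < P := Ordinal.opow_pos _ hlam0
  have absorb : ∀ r : Ordinal.{u}, r ≠ 0 → r ≤ lam.ord → Equ N (P * r + P) P := by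
    intro r hr0 hrle
    have h1 : Equ N (P * r + P) (P * r + P * lam.ord ^ (D : Ordinal)) :=
      equ_add_congr (Equ.refl N (P * r)) hbase
    have h2 : P * r + P * lam.ord ^ (D : Ordinal) = P * lam.ord ^ (D : Ordinal) := by
      rw [← mul_add, add_absorp_le lam hlam hrle hD]
    rw [h2] at h1
    exact h1.trans' hbase.symm'
  intro γ
  induction γ using Ordinal.induction with
  | h γ IH =>
    intro hγ0 hγcard
    constructor
    · -- non-limit case
      intro hnl
      rcases Ordinal.zero_or_succ_or_isSuccLimit γ with rfl | ⟨γ₀, rfl⟩ | hl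
      · exact absurd rfl hγ0
      · rcases eq_or_ne γ₀ 0 with rfl | hγ₀
        · rw [Ordinal.succ_zero, mul_one]
          exact Equ.refl N P
        · have hγ₀lt : γ₀ < Order.succ γ₀ := Order.lt_succ γ₀
          have hcard₀ : γ₀.card ≤ lam :=
            le_trans (Ordinal.card_le_card hγ₀lt.le) hγcard
          have IH₀ := IH γ₀ hγ₀lt hγ₀ hcard₀
          obtain ⟨r, hr0, hrle, hr⟩ : ∃ r : Ordinal.{u}, r ≠ 0 ∧ r ≤ lam.ord ∧
              Equ N (P * γ₀) (P * r) := by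
            by_cases hl₀ : Order.IsSuccLimit γ₀
            · refine ⟨γ₀.cof.ord, ?_, ?_, IH₀.2 hl₀⟩
              · intro h0
                apply hγ₀
                apply Ordinal.cof_eq_zero.1
                rw [← Cardinal.card_ord γ₀.cof, h0, Ordinal.card_zero]
              · exact Cardinal.ord_le_ord.2 (le_trans (Ordinal.cof_le_card γ₀) hcard₀)
            · have h1 := IH₀.1 hl₀
              refine ⟨1, one_ne_zero, ?_, by rwa [mul_one]⟩
              exact le_of_lt (lt_of_lt_of_le Ordinal.one_lt_omega0 hω)
          have hstep : Equ N (P * Order.succ γ₀) (P * r + P) := by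
            rw [Ordinal.mul_succ]
            exact equ_add_congr hr (Equ.refl N P)
          exact hstep.trans' (absorb r hr0 hrle)
      · exact absurd hl hnl
    · -- limit case
      intro hl
      obtain ⟨f, hf⟩ := Ordinal.exists_fundamental_sequence γ
      set f' : Ordinal.{u} → Ordinal.{u} :=
        fun j => if h : j < γ.cof.ord then f j h else 0 with hf'def
      set g : Ordinal.{u} → Ordinal.{u} :=
        fun i => Ordinal.bsup.{u, u} i (fun j _ => f' j + 1) with hgdef
      have hf'lt : ∀ j, j < γ.cof.ord → f' j < γ := by
        intro j hj
        rw [hf'def]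
        simp only [dif_pos hj]
        exact hf.lt hj
      have hf'mono : ∀ {j j'}, j < j' → j' < γ.cof.ord → f' j < f' j' := by
        intro j j' hjj hj'
        have hj : j < γ.cof.ord := lt_trans hjj hj'
        rw [hf'def]
        simp only [dif_pos hj, dif_pos hj']
        exact hf.2.1 hj hj' hjj
      have hgmono : ∀ {i i'}, i ≤ i' → g i ≤ g i' := by
        intro i i' hii
        exact Ordinal.bsup_le fun j hj => Ordinal.le_bsup _ j (lt_of_lt_of_le hj hii)
      have hgsucc : ∀ j, j < γ.cof.ord → g (j + 1) = f' j + 1 := by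
        intro j hj
        apply le_antisymm
        · refine Ordinal.bsup_le fun j' hj' => ?_
          rw [Ordinal.add_one_eq_succ j, Order.lt_succ_iff] at hj'
          rcases lt_or_eq_of_le hj' with h | rfl
          · rw [Ordinal.add_one_eq_succ (f' j'), Ordinal.add_one_eq_succ (f' j)]
            exact Order.succ_le_succ (hf'mono h hj).le
          · exact le_rfl
        · exact Ordinal.le_bsup _ j (by rw [Ordinal.add_one_eq_succ]; exact Order.lt_succ j)
      have hgstrict : ∀ i, i < γ.cof.ord → g i < g (i + 1) := by
        intro i hi
        rw [hgsucc i hi]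
        have hle : g i ≤ f' i := Ordinal.bsup_le fun j hj => by
          rw [Ordinal.add_one_eq_succ]
          exact Order.succ_le_of_lt (hf'mono hj hi)
        exact lt_of_le_of_lt hle (lt_add_one _)
      have hgκ : g γ.cof.ord = γ := by
        have heq : g γ.cof.ord = Ordinal.blsub.{u, u} γ.cof.ord f := by
          rw [hgdef]
          show Ordinal.bsup.{u, u} γ.cof.ord _ = Ordinal.blsub.{u, u} γ.cof.ord f
          unfold Ordinal.blsub
          congr 1
          funext j hj
          rw [hf'def]
          simp only [dif_pos hj]
          rw [Ordinal.add_one_eq_succ]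
        rw [heq, hf.blsub_eq]
      set G : Ordinal.{u} → Ordinal.{u} := fun i => P * g i with hGdef
      set d : Set.Iio γ.cof.ord → Ordinal.{u} := fun i => P * (g (i.1 + 1) - g i.1) with hddef
      have hd : ∀ i : Set.Iio γ.cof.ord, G i.1 + d i = G (i.1 + 1) := by
        rintro ⟨i, hi⟩
        show P * g i + P * (g (i + 1) - g i) = P * g (i + 1)
        rw [← mul_add, Ordinal.add_sub_cancel_of_le (hgmono ((le_self_add : i ≤ i + 1)))]
      have hGchar : ∀ i ≤ γ.cof.ord, G i = Ordinal.bsup.{u, u} i (fun j _ => G (j + 1)) := by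
        intro i hi
        rcases eq_or_ne i 0 with rfl | hi0
        · show P * g 0 = _
          rw [hgdef]
          show P * Ordinal.bsup 0 _ = _
          rw [Ordinal.bsup_zero, Ordinal.bsup_zero, mul_zero]
        · show P * g i = _
          have step1 : g i = Ordinal.bsup.{u, u} i (fun j _ => g (j + 1)) := by
            apply le_antisymm
            · refine Ordinal.bsup_le fun j hj => ?_
              have hfb : f' j + 1 ≤ g (j + 1) :=
                Ordinal.le_bsup _ j (by rw [Ordinal.add_one_eq_succ]; exact Order.lt_succ j)
              exact le_trans hfb (Ordinal.le_bsup _ j hj)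
            · refine Ordinal.bsup_le fun j hj => ?_
              refine hgmono ?_
              rw [Ordinal.add_one_eq_succ]
              exact Order.succ_le_of_lt hj
          rw [step1]
          exact Ordinal.IsNormal.bsup (Ordinal.isNormal_mul_right hP0) (fun j _ => g (j + 1)) hi0
      have hGκ : G γ.cof.ord = P * γ := by
        show P * g γ.cof.ord = P * γ
        rw [hgκ]
      have hpt : ∀ i : Set.Iio γ.cof.ord, Equ N (d i) ((fun _ : Set.Iio γ.cof.ord => P) i) := by
        rintro ⟨i, hi⟩
        show Equ N (P * (g (i + 1) - g i)) P
        set δ : Ordinal.{u} := g (i + 1) - g i with hδdef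
        have hδ0 : δ ≠ 0 := by
          rw [hδdef, Ne, Ordinal.sub_eq_zero_iff_le, not_le]
          exact hgstrict i hi
        have hδeq : g i + δ = g (i + 1) :=
          Ordinal.add_sub_cancel_of_le (hgmono ((le_self_add : i ≤ i + 1)))
        have hδlt : δ < γ := by
          have h1 : δ ≤ g (i + 1) := Ordinal.sub_le_self _ _
          have h2 : g (i + 1) < γ := by
            rw [hgsucc i hi, Ordinal.add_one_eq_succ]
            exact hl.succ_lt (hf'lt i hi)
          exact lt_of_le_of_lt h1 h2
        have hδnl : ¬ Order.IsSuccLimit δ := by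
          intro hδl
          have hlim : Order.IsSuccLimit (g (i + 1)) := hδeq ▸ Ordinal.isSuccLimit_add (g i) hδl
          rw [hgsucc i hi, Ordinal.add_one_eq_succ] at hlim
          exact absurd (hlim.succ_lt (Order.lt_succ (f' i))) (lt_irrefl _)
        have hδcard : δ.card ≤ lam := le_trans (Ordinal.card_le_card hδlt.le) hγcard
        exact (IH δ hδlt hδ0 hδcard).1 hδnl
      exact equ_pieces (N := N) (κo := γ.cof.ord) (G := G) (G' := fun i => P * i)
        (d := d) (d' := fun _ => P) hd hGchar hGκ
        (fun i => (mul_add_one P i.1).symm) (fun i _ => mul_bsup_char hP0 i) rfl hpt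

end Main

section Final

open Ordinal Set

/-- Core form of the final theorem. -/
theorem final_core (lam : Cardinal.{u}) (hlam : Cardinal.aleph0 ≤ lam) (n : ℕ) (Q D : ℕ)
    (hQ : 1 ≤ Q) (hD : 2 ≤ D)
    (hbase : Equ (n + 1) (lam.ord ^ (Q : Ordinal))
      (lam.ord ^ (Q : Ordinal) * lam.ord ^ (D : Ordinal))) :
    ∀ α β : Ordinal.{u}, α < (Order.succ lam).ord → β < (Order.succ lam).ord →
      (lam.ord ^ (Q : Ordinal)) ∣ α → (lam.ord ^ (Q : Ordinal)) ∣ β →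
      α.cof = β.cof → Equ (n + 1) α β := by
  intro α β hα hβ hdα hdβ hcof
  obtain ⟨γ, rfl⟩ := hdα
  obtain ⟨δ, rfl⟩ := hdβ
  have hω : ω ≤ lam.ord := by
    rw [← Cardinal.ord_aleph0]
    exact Cardinal.ord_le_ord.2 hlam
  have hlam0 : (0 : Ordinal) < lam.ord := lt_of_lt_of_le Ordinal.omega0_pos hω
  set P : Ordinal.{u} := lam.ord ^ (Q : Ordinal) with hPdef
  have hP0 : (0 : Ordinal) < P := Ordinal.opow_pos _ hlam0
  rcases eq_or_ne γ 0 with rfl | hγ0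
  · rw [mul_zero] at hcof ⊢
    have h0 : (P * δ).cof = 0 := by rw [← hcof, Ordinal.cof_zero]
    rw [Ordinal.cof_eq_zero.1 h0]
    exact Equ.refl _ _
  rcases eq_or_ne δ 0 with rfl | hδ0
  · rw [mul_zero] at hcof ⊢
    have h0 : (P * γ).cof = 0 := by rw [hcof, Ordinal.cof_zero]
    rw [Ordinal.cof_eq_zero.1 h0]
    exact Equ.refl _ _
  have cardle : ∀ ⦃ρ : Ordinal.{u}⦄, P * ρ < (Order.succ lam).ord → ρ.card ≤ lam := by
    intro ρ hρ
    have hle : ρ ≤ P * ρ := by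
      calc ρ = 1 * ρ := (one_mul ρ).symm
        _ ≤ P * ρ := mul_le_mul_left (Order.one_le_iff_pos.2 hP0) ρ
    have h := lt_of_le_of_lt hle hρ
    rw [Cardinal.lt_ord] at h
    exact (Order.lt_succ_iff).1 h
  have hγcard : γ.card ≤ lam := cardle hα
  have hδcard : δ.card ≤ lam := cardle hβ
  -- `P` has the same cofinality as `lam.ord`
  have hsplit : ∀ m : ℕ, 1 ≤ m →
      lam.ord ^ (m : Ordinal) = lam.ord ^ ((m - 1 : ℕ) : Ordinal) * lam.ord := by
    intro m hm
    have h' : m = (m - 1) + 1 := by omega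
    have hq : (m : Ordinal) = ((m - 1 : ℕ) : Ordinal) + 1 := by
      conv_lhs => rw [h']
      push_cast
      rfl
    rw [hq, Ordinal.opow_add, Ordinal.opow_one]
  have hPcof : P.cof = lam.ord.cof := by
    rw [hPdef, hsplit Q hQ]
    exact Ordinal.cof_map_of_isNormal (Ordinal.isNormal_mul_right (Ordinal.opow_pos _ hlam0)) (Cardinal.isSuccLimit_ord hlam)
  set L : Ordinal.{u} := lam.ord ^ (D : Ordinal) with hLdef
  have hLlimit : Order.IsSuccLimit L := by
    rw [hLdef, hsplit D (by omega)]
    exact Ordinal.isSuccLimit_mul_right (Ordinal.opow_pos _ hlam0) (Cardinal.isSuccLimit_ord hlam)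
  have hLcof : L.cof = lam.ord.cof := by
    rw [hLdef, hsplit D (by omega)]
    exact Ordinal.cof_map_of_isNormal (Ordinal.isNormal_mul_right (Ordinal.opow_pos _ hlam0)) (Cardinal.isSuccLimit_ord hlam)
  have hLcard : L.card ≤ lam := card_opow_nat lam hlam D
  have hX : Equ (n + 1) P (P * lam.ord.cof.ord) := by
    have h := (mainlem lam hlam hD hbase L hLlimit.pos.ne' hLcard).2 hLlimit
    rw [hLcof] at h
    exact hbase.trans' h
  have cof_mul_nonlimit : ∀ ⦃ρ : Ordinal.{u}⦄, ρ ≠ 0 → ¬ Order.IsSuccLimit ρ →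
      (P * ρ).cof = lam.ord.cof := by
    intro ρ hρ0 hρnl
    rcases Ordinal.zero_or_succ_or_isSuccLimit ρ with rfl | ⟨ρ₀, rfl⟩ | hll
    · exact absurd rfl hρ0
    · rw [Ordinal.mul_succ, Ordinal.cof_add _ hP0.ne', hPcof]
    · exact absurd hll hρnl
  have cof_mul_limit : ∀ ⦃ρ : Ordinal.{u}⦄, Order.IsSuccLimit ρ → (P * ρ).cof = ρ.cof :=
    fun ρ hll => Ordinal.cof_map_of_isNormal (Ordinal.isNormal_mul_right hP0) hll
  have hmγ := mainlem lam hlam hD hbase γ hγ0 hγcard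
  have hmδ := mainlem lam hlam hD hbase δ hδ0 hδcard
  by_cases hγl : Order.IsSuccLimit γ <;> by_cases hδl : Order.IsSuccLimit δ
  · -- both limit
    have h1 := hmγ.2 hγl
    have h2 := hmδ.2 hδl
    have hcc : γ.cof = δ.cof := by
      rw [cof_mul_limit hγl, cof_mul_limit hδl] at hcof
      exact hcof
    rw [hcc] at h1
    exact h1.trans' h2.symm'
  · -- γ limit, δ not
    have h1 := hmγ.2 hγl
    have h2 := hmδ.1 hδl
    have hcc : γ.cof = lam.ord.cof := by
      rw [cof_mul_limit hγl, cof_mul_nonlimit hδ0 hδl] at hcof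
      exact hcof
    rw [hcc] at h1
    exact (h1.trans' hX.symm').trans' h2.symm'
  · -- γ not, δ limit
    have h1 := hmγ.1 hγl
    have h2 := hmδ.2 hδl
    have hcc : δ.cof = lam.ord.cof := by
      rw [cof_mul_limit hδl, cof_mul_nonlimit hγ0 hγl] at hcof
      exact hcof.symm
    rw [hcc] at h2
    exact (h1.trans' hX).trans' h2.symm'
  · -- both non-limit
    exact (hmγ.1 hγl).trans' (hmδ.1 hδl).symm'

end Final






end ShelahMSO

/-- (Shelah, proof of Thm 3.5(B), claim (*).) For every `n` there is `q < ω` such that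
any two ordinals `α, β < λ⁺` divisible by `λ^q` and of equal cofinality satisfy the
same monadic sentences of quantifier depth `≤ n`. -/
theorem exists_q_divisible_same_cofinality_equiv
    (lam : Cardinal) (hlam : Cardinal.aleph0 ≤ lam) (n : ℕ) :
    ∃ q : ℕ, ∀ α β : Ordinal,
      α < (Order.succ lam).ord → β < (Order.succ lam).ord →
      (lam.ord ^ (q : Ordinal)) ∣ α → (lam.ord ^ (q : Ordinal)) ∣ β →
      α.cof = β.cof →
      ∀ φ : MSO 0 0 0, φ.depth ≤ n →
        (MSO.SatS (α := ↥(Set.Iio α)) (fun p => p.elim0) φ ↔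
         MSO.SatS (α := ↥(Set.Iio β)) (fun p => p.elim0) φ) := by
  classical
  set F : ℕ → ShelahMSO.ThT (n + 1) 0 := fun m =>
    ShelahMSO.th (n + 1)
      (fun X : Fin 0 => (X.elim0 : Set (Set.Iio (lam.ord ^ ((2 * m + 2 : ℕ) : Ordinal)))))
    with hF
  obtain ⟨x, y, hxy, hFeq⟩ := Finite.exists_ne_map_eq_of_infinite F
  have key : ∀ x y : ℕ, x < y → F x = F y → ∃ q : ℕ, ∀ α β : Ordinal,
      α < (Order.succ lam).ord → β < (Order.succ lam).ord →
      (lam.ord ^ (q : Ordinal)) ∣ α → (lam.ord ^ (q : Ordinal)) ∣ β →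
      α.cof = β.cof →
      ∀ φ : MSO 0 0 0, φ.depth ≤ n →
        (MSO.SatS (α := ↥(Set.Iio α)) (fun p => p.elim0) φ ↔
         MSO.SatS (α := ↥(Set.Iio β)) (fun p => p.elim0) φ) := by
    clear hFeq hxy x y
    intro x y hxy hFeq
    set Q : ℕ := 2 * x + 2 with hQ
    set D : ℕ := (2 * y + 2) - (2 * x + 2) with hD
    have hbase : ShelahMSO.Equ (n + 1) (lam.ord ^ (Q : Ordinal))
        (lam.ord ^ (Q : Ordinal) * lam.ord ^ (D : Ordinal)) := by
      have h1 : ShelahMSO.Equ (n + 1) (lam.ord ^ ((2 * x + 2 : ℕ) : Ordinal))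
          (lam.ord ^ ((2 * y + 2 : ℕ) : Ordinal)) := ShelahMSO.eqv_of_th_eq hFeq
      have hcast : ((2 * y + 2 : ℕ) : Ordinal) = ((Q : ℕ) : Ordinal) + ((D : ℕ) : Ordinal) := by
        rw [← Nat.cast_add]
        congr 1
        omega
      rw [hcast, Ordinal.opow_add] at h1
      exact h1
    have hcore := ShelahMSO.final_core lam hlam n Q D (by omega) (by omega) hbase
    refine ⟨Q, fun α β hα hβ hdα hdβ hcof φ hφ => ?_⟩
    have hE := hcore α β hα hβ hdα hdβ hcof
    unfold ShelahMSO.Equ ShelahMSO.EquT at hE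
    rw [ShelahMSO.emptyFam_eq (fun X : Fin 0 => (X.elim0 : Set (Set.Iio α)))
        (ShelahMSO.sig (fun i : Fin 0 => (i.elim0 : Set.Iio α))
          (fun i : Fin 0 => (i.elim0 : Set (Set.Iio α)))),
      ShelahMSO.emptyFam_eq (fun X : Fin 0 => (X.elim0 : Set (Set.Iio β)))
        (ShelahMSO.sig (fun i : Fin 0 => (i.elim0 : Set.Iio β))
          (fun i : Fin 0 => (i.elim0 : Set (Set.Iio β))))] at hE
    exact ShelahMSO.bridge φ (fun p => p.elim0) (fun p => p.elim0) hE
      (Nat.succ_le_succ hφ)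
  rcases hxy.lt_or_gt with hlt | hlt
  · exact key x y hlt hFeq
  · exact key y x hlt hFeq.symm
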